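/- Let K be a finite field of characteristic 2 with |K| = 2^m, let e divide m, and let Q : K → F_{2^e} be a function such that B(x,y) := Q(x+y) + Q(x) + Q(y) is F_{2^e}-bilinear. Then the exponential sum S = Σ_{x ∈ K} (-1)^{Tr_{F_{2^e}/F_2}(Q(x))} satisfies: S = 0 if the rank r of the quadratic form Q is odd, and S = ± 2^{m - e·r/2} if r is even. -/

import Mathlib

open Finset


open Module LinearMap.BilinForm in
private lemma even_finrank_of_alt_nondeg {𝔽 : Type*} [Field 𝔽] :
    ∀ (n : ℕ) {V : Type*} [AddCommGroup V] [Module 𝔽 V] [FiniteDimensional 𝔽 V]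
      (B : LinearMap.BilinForm 𝔽 V), B.IsAlt → B.Nondegenerate →
      Module.finrank 𝔽 V = n → Even n := by
  intro n
  induction n using Nat.strong_induction_on with
  | _ n ih =>
    intro V _ _ _ B halt hnd hdim
    rcases Nat.eq_zero_or_pos n with h0 | hpos
    · simp [h0]
    have hrefl : B.IsRefl := halt.isRefl
    have hVnt : 0 < Module.finrank 𝔽 V := hdim ▸ hpos
    obtain ⟨x, hx⟩ := Module.finrank_pos_iff_exists_ne_zero.mp hVnt
    have hxy : ∃ y, B x y ≠ 0 := by
      by_contra hcon
      push_neg at hcon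
      exact hx (hnd.1 x hcon)
    obtain ⟨y, hc⟩ := hxy
    set c := B x y with hcdef
    have hli : LinearIndependent 𝔽 ![x, y] := by
      rw [LinearIndependent.pair_iff]
      intro s t hst
      have h1 : B (s • x + t • y) y = 0 := by rw [hst]; simp
      have h2 : B x (s • x + t • y) = 0 := by rw [hst]; simp
      simp only [map_add, map_smul, LinearMap.add_apply, LinearMap.smul_apply,
        smul_eq_mul, halt.self_eq_zero, mul_zero, add_zero, zero_add] at h1 h2
      constructor
      · rcases mul_eq_zero.mp h1 with h | h
        · exact h
        · exact absurd h hc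
      · rcases mul_eq_zero.mp h2 with h | h
        · exact h
        · exact absurd h hc
    have hrange : Set.range ![x, y] = {x, y} := by
      ext z
      simp [Fin.exists_fin_two, or_comm, eq_comm]
    set P : Submodule 𝔽 V := Submodule.span 𝔽 {x, y} with hP
    have hPrank : Module.finrank 𝔽 P = 2 := by
      have := finrank_span_eq_card hli
      rw [hrange] at this
      simpa [hP] using this
    have hxP : x ∈ P := Submodule.subset_span (by simp)
    have hyP : y ∈ P := Submodule.subset_span (by simp)
    have hdisj : Disjoint P (B.orthogonal P) := by
      rw [Submodule.disjoint_def]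
      intro z hzP hzO
      obtain ⟨s, t, rfl⟩ := Submodule.mem_span_pair.mp hzP
      have h1 : B x (s • x + t • y) = 0 := hzO x hxP
      have h2 : B y (s • x + t • y) = 0 := hzO y hyP
      simp only [map_add, map_smul, smul_eq_mul, halt.self_eq_zero, mul_zero,
        add_zero, zero_add] at h1 h2
      have hyx : B y x = -c := (LinearMap.IsAlt.neg halt x y).symm
      rw [hyx] at h2
      have hs : s = 0 := by
        rcases mul_eq_zero.mp h2 with h | h
        · exact h
        · exact absurd (neg_eq_zero.mp h) hc
      have ht : t = 0 := by
        rcases mul_eq_zero.mp h1 with h | h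
        · exact h
        · exact absurd h hc
      simp [hs, ht]
    have hrest : (B.restrict P).Nondegenerate :=
      nondegenerate_restrict_of_disjoint_orthogonal B hrefl hdisj
    have hcompl : IsCompl P (B.orthogonal P) :=
      isCompl_orthogonal_of_restrict_nondegenerate hrefl hrest
    have hrest2 : (B.restrict (B.orthogonal P)).Nondegenerate := by
      apply nondegenerate_restrict_of_disjoint_orthogonal B hrefl
      rw [orthogonal_orthogonal hnd hrefl]
      exact hcompl.disjoint.symm
    have halt2 : (B.restrict (B.orthogonal P)).IsAlt := fun z => halt z
    have hsum : Module.finrank 𝔽 P + Module.finrank 𝔽 (B.orthogonal P) = n := by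
      rw [← hdim]
      exact (Submodule.finrank_add_eq_of_isCompl hcompl)
    have hlt : Module.finrank 𝔽 (B.orthogonal P) < n := by omega
    obtain ⟨k, hk⟩ := ih _ hlt (B.restrict (B.orthogonal P)) halt2 hrest2 rfl
    exact ⟨k + 1, by omega⟩

private lemma chi_val_add : ∀ u v : ZMod 2,
    (-1 : ℤ) ^ (u + v).val = (-1 : ℤ) ^ u.val * (-1 : ℤ) ^ v.val := by decide

private lemma chi_val_add_one : ∀ u : ZMod 2,
    (-1 : ℤ) ^ (u + 1).val = -(-1 : ℤ) ^ u.val := by decide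

private lemma sum_char_eq_zero {V : Type*} [AddCommGroup V] [Fintype V]
    (φ : V → ZMod 2) (hφ : ∀ a b, φ (a + b) = φ a + φ b)
    (x0 : V) (h1 : φ x0 = 1) : ∑ x : V, (-1 : ℤ) ^ (φ x).val = 0 := by
  have key : ∑ x : V, (-1 : ℤ) ^ (φ x).val = ∑ x : V, (-1 : ℤ) ^ (φ (x + x0)).val :=
    (Fintype.sum_equiv (Equiv.addRight x0) (fun x => (-1 : ℤ) ^ (φ (x + x0)).val)
      (fun x => (-1 : ℤ) ^ (φ x).val) (fun x => rfl)).symm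
  have key2 : ∀ x : V, (-1 : ℤ) ^ (φ (x + x0)).val = -(-1 : ℤ) ^ (φ x).val := by
    intro x
    rw [hφ, h1, chi_val_add_one]
  rw [Finset.sum_congr rfl (fun x _ => key2 x), Finset.sum_neg_distrib] at key
  linarith


/-- Evaluation of a binary quadratic-form exponential sum: with `r` the rank of
the quadratic form `Q : K → F_{2^e}` (i.e. `m/e` minus the `F_{2^e}`-dimension
of `{x ∈ Rad(B) : Q x = 0}`), the sum `S = Σ_x (-1)^{Tr(Q x)}` is `0` if `r`
is odd and `±2^{m - e·r/2}` if `r` is even. -/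
theorem quadratic_exponential_sum_eval (m e : ℕ) (hm : 0 < m) (he : 0 < e)
    (hem : e ∣ m)
    (F K : Type*) [Field F] [Field K] [Algebra F K] [Fintype F] [Fintype K]
    [Algebra (ZMod 2) F]
    (hF : Fintype.card F = 2 ^ e) (hK : Fintype.card K = 2 ^ m)
    (Q : K → F) (B : K → K → F) (hB : ∀ x y, B x y = Q (x + y) + Q x + Q y)
    (Bl : K →ₗ[F] K →ₗ[F] F) (hBl : ∀ x y, Bl x y = B x y)
    (W : Submodule F K)
    (hW : (W : Set K) = {x : K | (∀ y, B x y = 0) ∧ Q x = 0})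
    (r : ℕ) (hr : r = m / e - Module.finrank F W) :
    (Odd r → ∑ x : K, (-1 : ℤ) ^ (Algebra.trace (ZMod 2) F (Q x)).val = 0) ∧
    (Even r → ∑ x : K, (-1 : ℤ) ^ (Algebra.trace (ZMod 2) F (Q x)).val = 2 ^ (m - e * (r / 2)) ∨
        ∑ x : K, (-1 : ℤ) ^ (Algebra.trace (ZMod 2) F (Q x)).val = -2 ^ (m - e * (r / 2))) := by
  -- characteristic 2 facts
  haveI : CharP F 2 := charP_of_injective_ringHom (algebraMap (ZMod 2) F).injective 2
  haveI : CharP K 2 := charP_of_injective_ringHom (algebraMap F K).injective 2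
  have haddF : ∀ a : F, a + a = 0 := fun a => CharTwo.add_self_eq_zero a
  have haddK : ∀ x : K, x + x = 0 := fun x => CharTwo.add_self_eq_zero x
  have h2F : (2 : F) = 0 := by
    have := CharP.cast_eq_zero F 2
    simpa using this
  have hQ0 : Q 0 = 0 := by
    have h := hBl 0 0
    rw [hB] at h
    simp only [map_zero, LinearMap.zero_apply, add_zero] at h
    linear_combination (-1 : F) * h - Q 0 * h2F
  have hBsymm : ∀ x y, B x y = B y x := by
    intro x y; rw [hB, hB, add_comm x y]; ring
  have hQadd : ∀ x y, Q (x + y) = Q x + Q y + B x y := by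
    intro x y
    linear_combination (-1 : F) * hB x y - (Q x + Q y) * h2F
  -- the character
  set tr := Algebra.trace (ZMod 2) F with htrdef
  obtain ⟨a1, ha1⟩ : ∃ a : F, tr a = 1 := Algebra.trace_surjective (ZMod 2) F 1
  set χ : F → ℤ := fun a => (-1 : ℤ) ^ (tr a).val with hχdef
  have hχadd : ∀ a b : F, χ (a + b) = χ a * χ b := by
    intro a b
    simp only [hχdef, map_add]
    exact chi_val_add (tr a) (tr b)
  have hχ0 : χ 0 = 1 := by simp [hχdef]
  -- the radical
  set Rad : Submodule F K := LinearMap.ker Bl with hRaddef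
  have hRadmem : ∀ x : K, x ∈ Rad ↔ ∀ y, B x y = 0 := by
    intro x
    rw [hRaddef, LinearMap.mem_ker, LinearMap.ext_iff]
    constructor
    · intro h y; rw [← hBl]; exact h y
    · intro h y; rw [LinearMap.zero_apply, hBl]; exact h y
  set S : ℤ := ∑ x : K, χ (Q x) with hSdef
  haveI : Fintype ↥Rad := Fintype.ofFinite _
  have hS2 : S * S = 2 ^ m * ∑ z : ↥Rad, χ (Q z) := by
    classical
    have hinner : ∀ z : K, (∑ x : K, χ (B x z)) = if z ∈ Rad then ((2 : ℤ) ^ m) else 0 := by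
      intro z
      by_cases hz : z ∈ Rad
      · rw [if_pos hz]
        have hzz : ∀ x : K, B x z = 0 := fun x => by rw [hBsymm]; exact (hRadmem z).mp hz x
        simp only [hzz, hχ0]
        rw [Finset.sum_const, nsmul_eq_mul, mul_one]
        rw [show (Finset.univ : Finset K).card = Fintype.card K from rfl, hK]
        push_cast
        ring
      · rw [if_neg hz]
        have : ¬ ∀ y, B z y = 0 := fun h => hz ((hRadmem z).mpr h)
        obtain ⟨y0, hy0⟩ := not_forall.mp this
        have hcne : B y0 z ≠ 0 := by rw [← hBsymm]; exact hy0
        set c := B y0 z with hc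
        have hφadd : ∀ x x' : K, tr (B (x + x') z) = tr (B x z) + tr (B x' z) := by
          intro x x'
          have hB3 : B (x + x') z = B x z + B x' z := by
            rw [← hBl, ← hBl, ← hBl, map_add, LinearMap.add_apply]
          rw [hB3, map_add]
        have hx1 : tr (B ((a1 * c⁻¹) • y0) z) = 1 := by
          have hsm : B ((a1 * c⁻¹) • y0) z = (a1 * c⁻¹) * c := by
            rw [← hBl, map_smul, LinearMap.smul_apply, smul_eq_mul, hBl]
          rw [hsm, mul_assoc, inv_mul_cancel₀ hcne, mul_one, ha1]
        exact sum_char_eq_zero (fun x => tr (B x z)) hφadd _ hx1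
    have step1 : S * S = ∑ x : K, ∑ y : K, χ (Q x) * χ (Q y) := by
      rw [hSdef, Finset.sum_mul_sum]
    have step2 : ∀ x : K, (∑ y : K, χ (Q x) * χ (Q y)) = ∑ z : K, χ (Q z + B x z) := by
      intro x
      rw [← Fintype.sum_equiv (Equiv.addLeft x) (fun z => χ (Q x) * χ (Q (x + z)))
        (fun y => χ (Q x) * χ (Q y)) (fun z => rfl)]
      apply Finset.sum_congr rfl
      intro z _
      rw [← hχadd, hQadd x z]
      congr 1
      linear_combination (Q x) * h2F
    calc S * S = ∑ x : K, ∑ y : K, χ (Q x) * χ (Q y) := step1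
      _ = ∑ x : K, ∑ z : K, χ (Q z + B x z) := Finset.sum_congr rfl fun x _ => step2 x
      _ = ∑ z : K, ∑ x : K, χ (Q z + B x z) := Finset.sum_comm
      _ = ∑ z : K, χ (Q z) * ∑ x : K, χ (B x z) := by
          apply Finset.sum_congr rfl
          intro z _
          rw [Finset.mul_sum]
          exact Finset.sum_congr rfl fun x _ => hχadd (Q z) (B x z)
      _ = ∑ z : K, (if z ∈ Rad then χ (Q z) * 2 ^ m else 0) := by
          apply Finset.sum_congr rfl
          intro z _
          rw [hinner z]
          split <;> simp
      _ = ∑ z ∈ Finset.univ.filter (· ∈ Rad), χ (Q z) * 2 ^ m := by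
          rw [Finset.sum_filter]
      _ = ∑ z : ↥Rad, χ (Q z) * 2 ^ m := by
          exact Finset.sum_subtype _ (by simp) _
      _ = 2 ^ m * ∑ z : ↥Rad, χ (Q z) := by
          rw [Finset.mul_sum]
          exact Finset.sum_congr rfl fun z _ => mul_comm _ _
  have hSgoal : (∑ x : K, (-1 : ℤ) ^ (tr (Q x)).val) = S := rfl
  haveI : Fintype ↥W := Fintype.ofFinite _
  have hdimK : Module.finrank F K = m / e := by
    have hc := Module.card_eq_pow_finrank (K := F) (V := K)
    rw [hF, hK, ← pow_mul] at hc
    have hme := Nat.pow_right_injective (le_refl 2) hc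
    rw [hme, Nat.mul_div_cancel_left _ he]
  set dR := Module.finrank F ↥Rad with hdR
  set dW := Module.finrank F ↥W with hdW
  obtain ⟨U, hU⟩ := Submodule.exists_isCompl Rad
  set dU := Module.finrank F ↥U with hdU
  set D := m / e with hD
  have hsumdim : dR + dU = D := by
    rw [← hdimK]
    exact Submodule.finrank_add_eq_of_isCompl hU
  have halt : Bl.IsAlt := by
    intro x
    rw [hBl, hB, haddK, hQ0, zero_add]
    exact haddF _
  have hrefl : Bl.IsRefl := halt.isRefl
  have hBlsymm : ∀ x y, Bl x y = Bl y x := fun x y => by rw [hBl, hBl, hBsymm]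
  have hdisjU : Disjoint U (LinearMap.BilinForm.orthogonal Bl U) := by
    rw [Submodule.disjoint_def]
    intro z hzU hzO
    have hzRad : z ∈ Rad := by
      have hall : ∀ w : K, Bl z w = 0 := by
        intro w
        have hw : w ∈ Rad ⊔ U := by rw [hU.codisjoint.eq_top]; trivial
        obtain ⟨wr, hwr, wu, hwu, rfl⟩ := Submodule.mem_sup.mp hw
        have h1 : Bl z wr = 0 := by
          rw [hBlsymm]
          exact LinearMap.congr_fun (LinearMap.mem_ker.mp hwr) z
        have h2 : Bl z wu = 0 := by
          rw [hBlsymm]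
          exact LinearMap.BilinForm.mem_orthogonal_iff.mp hzO wu hwu
        rw [map_add, h1, h2, add_zero]
      rw [hRaddef, LinearMap.mem_ker]
      exact LinearMap.ext hall
    have hmem : z ∈ Rad ⊓ U := ⟨hzRad, hzU⟩
    rw [hU.disjoint.eq_bot] at hmem
    exact (Submodule.mem_bot F).mp hmem
  have hndU : (LinearMap.BilinForm.restrict Bl U).Nondegenerate :=
    LinearMap.BilinForm.nondegenerate_restrict_of_disjoint_orthogonal Bl hrefl hdisjU
  have haltU : (LinearMap.BilinForm.restrict Bl U).IsAlt := fun z => halt z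
  have hdUeven : Even dU := even_finrank_of_alt_nondeg dU (LinearMap.BilinForm.restrict Bl U) haltU hndU rfl
  have hWRad : W ≤ Rad := by
    intro x hx
    have hx' : x ∈ (W : Set K) := hx
    rw [hW] at hx'
    exact (hRadmem x).mpr hx'.1
  by_cases hQRad : ∀ z ∈ Rad, Q z = 0
  · -- Q vanishes on the radical : r is even, S = ± 2^(m - e r/2)
    have hWeq : W = Rad := by
      apply le_antisymm hWRad
      intro x hx
      have : x ∈ (W : Set K) := by
        rw [hW]
        exact ⟨(hRadmem x).mp hx, hQRad x hx⟩
      exact this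
    have hdWR : dW = dR := by rw [hdW, hdR, hWeq]
    have hsumRad : (∑ z : ↥Rad, χ (Q z)) = (2 : ℤ) ^ (e * dR) := by
      have hone : ∀ z : ↥Rad, χ (Q z) = 1 := fun z => by rw [hQRad z z.2, hχ0]
      rw [Finset.sum_congr rfl (fun z _ => hone z), Finset.sum_const, nsmul_eq_mul, mul_one]
      have hcard : Fintype.card ↥Rad = (2 ^ e) ^ dR := by
        have hcc := Module.card_eq_pow_finrank (K := F) (V := ↥Rad)
        rw [hF] at hcc
        exact hcc
      rw [show ((Finset.univ : Finset ↥Rad).card) = Fintype.card ↥Rad from rfl, hcard, ← pow_mul]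
      push_cast
      ring
    have hrval : r = dU := by omega
    obtain ⟨k, hk⟩ := hdUeven
    have hrhalf : r / 2 = k := by omega
    have hmsum : m = e * dR + e * dU := by
      have h1 : m = e * D := (Nat.mul_div_cancel' hem).symm
      rw [h1, ← hsumdim, Nat.mul_add]
    have h2' : e * dU = e * k + e * k := by rw [hk, Nat.mul_add]
    have hexp : m + e * dR = (m - e * (r / 2)) + (m - e * (r / 2)) := by
      rw [hrhalf]
      rw [h2'] at hmsum
      generalize hA : e * dR = A at hmsum ⊢
      generalize hC : e * k = C at hmsum ⊢
      omega
    have hSsq : S * S = 2 ^ (m - e * (r / 2)) * 2 ^ (m - e * (r / 2)) := by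
      rw [hS2, hsumRad, ← pow_add, hexp, pow_add]
    have hfac : (S - 2 ^ (m - e * (r / 2))) * (S + 2 ^ (m - e * (r / 2))) = 0 := by
      linear_combination hSsq
    constructor
    · intro hodd
      obtain ⟨k2, hk2⟩ := hodd
      omega
    · intro _
      rcases mul_eq_zero.mp hfac with h | h
      · left; linarith
      · right; linarith
  · -- Q does not vanish on the radical : r is odd, S = 0
    push_neg at hQRad
    obtain ⟨z0, hz0R, hz0⟩ := hQRad
    have hz0W : z0 ∉ W := by
      intro h
      have : z0 ∈ (W : Set K) := h
      rw [hW] at this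
      exact hz0 this.2
    have hWlt : W < Rad := lt_of_le_of_ne hWRad (fun h => hz0W (h ▸ hz0R))
    have hdWlt : dW < dR := Submodule.finrank_lt_finrank_of_lt hWlt
    have hQaddRad : ∀ z1 z2 : ↥Rad, Q ((z1 : K) + (z2 : K)) = Q z1 + Q z2 := by
      intro z1 z2
      rw [hQadd, (hRadmem z1).mp z1.2 z2, add_zero]
    set φQ : ↥Rad →+ F :=
      { toFun := fun z => Q z
        map_zero' := by simpa using hQ0
        map_add' := by
          intro z1 z2
          simpa using hQaddRad z1 z2 } with hφQ
    have hcardRad : Nat.card ↥Rad = (2 ^ e) ^ dR := by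
      rw [Nat.card_eq_fintype_card]
      have hcc := Module.card_eq_pow_finrank (K := F) (V := ↥Rad)
      rw [hF] at hcc
      exact hcc
    have hcardW : Nat.card ↥W = (2 ^ e) ^ dW := by
      rw [Nat.card_eq_fintype_card]
      have hcc := Module.card_eq_pow_finrank (K := F) (V := ↥W)
      rw [hF] at hcc
      exact hcc
    have hkerW : Nat.card ↥(φQ.ker) = Nat.card ↥W := by
      apply Nat.card_congr
      refine ⟨fun z => ⟨((z : ↥Rad) : K), ?_⟩, fun w => ⟨⟨(w : K), hWRad w.2⟩, ?_⟩, ?_, ?_⟩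
      · have hker : Q ((z : ↥Rad) : K) = 0 := z.2
        show ((z : ↥Rad) : K) ∈ (W : Set K)
        rw [hW]
        exact ⟨(hRadmem _).mp (z : ↥Rad).2, hker⟩
      · have hw : (w : K) ∈ (W : Set K) := w.2
        rw [hW] at hw
        exact hw.2
      · intro z; rfl
      · intro w; rfl
    have hiso : Nat.card (↥Rad ⧸ φQ.ker) = Nat.card ↥(φQ.range) :=
      Nat.card_congr (QuotientAddGroup.quotientKerEquivRange φQ).toEquiv
    have hmul : Nat.card ↥Rad = Nat.card (↥Rad ⧸ φQ.ker) * Nat.card ↥(φQ.ker) :=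
      AddSubgroup.card_eq_card_quotient_mul_card_addSubgroup φQ.ker
    have hrangeval : Nat.card ↥(φQ.range) * (2 ^ e) ^ dW = (2 ^ e) ^ dR := by
      rw [← hcardW, ← hkerW, ← hiso, ← hmul, hcardRad]
    have hFcard : Nat.card F = 2 ^ e := by rw [Nat.card_eq_fintype_card, hF]
    have hrangele : Nat.card ↥(φQ.range) ≤ 2 ^ e := by
      rw [← hFcard]
      exact Nat.card_le_card_of_injective _ Subtype.val_injective
    have hpow1 : (2 : ℕ) ^ e ≠ 0 := by positivity
    have hrange_eq : Nat.card ↥(φQ.range) = (2 ^ e) ^ (dR - dW) := by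
      have hsplit : (2 ^ e : ℕ) ^ dR = (2 ^ e) ^ (dR - dW) * (2 ^ e) ^ dW := by
        rw [← pow_add]
        congr 1
        omega
      rw [hsplit] at hrangeval
      exact Nat.eq_of_mul_eq_mul_right (Nat.pos_of_ne_zero (by positivity)) hrangeval
    have h2e : 2 ≤ 2 ^ e := by
      calc 2 = 2 ^ 1 := (pow_one 2).symm
        _ ≤ 2 ^ e := Nat.pow_le_pow_right (by norm_num) he
    have hdRW1 : dR - dW = 1 := by
      have hge : (2 ^ e : ℕ) ^ 1 ≤ (2 ^ e) ^ (dR - dW) :=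
        Nat.pow_le_pow_right (by positivity) (by omega)
      have hle : (2 ^ e : ℕ) ^ (dR - dW) ≤ (2 ^ e) ^ 1 := by
        rw [pow_one, ← hrange_eq]
        exact hrangele
      exact Nat.pow_right_injective h2e (le_antisymm hle hge)
    have hrangetop : φQ.range = ⊤ := by
      apply AddSubgroup.eq_top_of_card_eq
      rw [hrange_eq, hdRW1, pow_one, hFcard]
    have hz1 : ∃ z : ↥Rad, φQ z = a1 := by
      have : a1 ∈ φQ.range := by rw [hrangetop]; trivial
      exact this
    obtain ⟨z1, hz1val⟩ := hz1
    have hsum0 : (∑ z : ↥Rad, χ (Q (z : K))) = 0 := by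
      apply sum_char_eq_zero (fun z : ↥Rad => tr (Q (z : K))) ?_ z1 ?_
      · intro z1' z2'
        show tr (Q ((z1' + z2' : ↥Rad) : K)) = _
        rw [Submodule.coe_add, hQaddRad z1' z2', map_add]
      · show tr (Q (z1 : K)) = 1
        have : Q (z1 : K) = a1 := hz1val
        rw [this, ha1]
    have hS0 : S = 0 := by
      have : S * S = 0 := by rw [hS2, hsum0, mul_zero]
      exact mul_self_eq_zero.mp this
    constructor
    · intro _
      exact hS0
    · intro heven
      exfalso
      obtain ⟨k, hk⟩ := heven
      obtain ⟨k2, hk2⟩ := hdUeven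
      omega
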